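/- Convex-duality defect controls the distance between approximations of the diffusion matrix: let d ≥ 1 be an integer and Λ ∈ [1,∞). There exists a constant C < ∞ depending only on d and Λ with the following property. Let A, B, ã be symmetric d×d real matrices such that for all ξ ∈ ℝ^d: |ξ|^2 ≤ ξ·Bξ ≤ ξ·Aξ ≤ Λ|ξ|^2 and |ξ|^2 ≤ ξ·ãξ ≤ Λ|ξ|^2. Define J(p,q) := ½ p·Ap + ½ q·B^{−1}q − p·q for p, q ∈ ℝ^d. Then J(p, ãp) ≥ 0 for every p, and ‖ã − A‖ + ‖ã − B‖ ≤ C · sup_{|p| ≤ 1} (J(p, ãp))^{1/2}, where ‖M‖ := sup_{|p| ≤ 1} |Mp| is the operator norm. -/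

import Mathlib

open Matrix

noncomputable section

/-- The operator norm `‖M‖ = sup_{|p| ≤ 1} |Mp|` of a matrix, written with Euclidean
norms expressed through dot products. -/
def matNorm {d : ℕ} (M : Matrix (Fin d) (Fin d) ℝ) : ℝ :=
  ⨆ p : {p : Fin d → ℝ // p ⬝ᵥ p ≤ 1}, Real.sqrt (M.mulVec p.1 ⬝ᵥ M.mulVec p.1)

/-- The duality defect `J(p,q) = ½ p·Ap + ½ q·B⁻¹q − p·q`. -/
def Jmat {d : ℕ} (A B : Matrix (Fin d) (Fin d) ℝ) (p q : Fin d → ℝ) : ℝ :=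
  (1 / 2) * (p ⬝ᵥ A.mulVec p) + (1 / 2) * (q ⬝ᵥ B⁻¹.mulVec q) - p ⬝ᵥ q

namespace Stmt10Aux

variable {d : ℕ}

lemma dp_self_nonneg (x : Fin d → ℝ) : 0 ≤ x ⬝ᵥ x :=
  Finset.sum_nonneg fun _ _ => mul_self_nonneg _

lemma dp_symm {M : Matrix (Fin d) (Fin d) ℝ} (hM : M.IsSymm) (x y : Fin d → ℝ) :
    x ⬝ᵥ M.mulVec y = M.mulVec x ⬝ᵥ y := by
  rw [dotProduct_mulVec, ← mulVec_transpose, hM.eq]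

/-- Cauchy–Schwarz for a positive semidefinite symmetric bilinear form. -/
lemma cs {M : Matrix (Fin d) (Fin d) ℝ} (hM : M.IsSymm)
    (hpsd : ∀ x, 0 ≤ x ⬝ᵥ M.mulVec x) (x y : Fin d → ℝ) :
    (x ⬝ᵥ M.mulVec y) ^ 2 ≤ (x ⬝ᵥ M.mulVec x) * (y ⬝ᵥ M.mulVec y) := by
  have key : ∀ t : ℝ, 0 ≤ (y ⬝ᵥ M.mulVec y) * (t * t) + (2 * (x ⬝ᵥ M.mulVec y)) * t
      + (x ⬝ᵥ M.mulVec x) := by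
    intro t
    have h := hpsd (x + t • y)
    have hyx : y ⬝ᵥ M.mulVec x = x ⬝ᵥ M.mulVec y := by
      rw [dp_symm hM y x, dotProduct_comm]
    simp only [mulVec_add, mulVec_smul, dotProduct_add, add_dotProduct,
      dotProduct_smul, smul_dotProduct, smul_eq_mul, hyx] at h
    nlinarith [h]
  have hd := discrim_le_zero key
  simp only [discrim] at hd
  nlinarith [hd]

/-- Plain Cauchy–Schwarz for the dot product. -/
lemma cs1 (x y : Fin d → ℝ) : (x ⬝ᵥ y) ^ 2 ≤ (x ⬝ᵥ x) * (y ⬝ᵥ y) := by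
  have h := cs (M := (1 : Matrix (Fin d) (Fin d) ℝ)) (Matrix.transpose_one)
    (fun z => by simpa [one_mulVec] using dp_self_nonneg z) x y
  simpa [one_mulVec] using h

/-- For `0 ≤ M ≤ Λ` symmetric, `|Mp|² ≤ Λ ⟨p, Mp⟩`. -/
lemma sq_bound {M : Matrix (Fin d) (Fin d) ℝ} (hM : M.IsSymm)
    (hpsd : ∀ x, 0 ≤ x ⬝ᵥ M.mulVec x) {Λ : ℝ} (hΛ : 0 ≤ Λ)
    (hub : ∀ x, x ⬝ᵥ M.mulVec x ≤ Λ * (x ⬝ᵥ x)) (p : Fin d → ℝ) :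
    M.mulVec p ⬝ᵥ M.mulVec p ≤ Λ * (p ⬝ᵥ M.mulVec p) := by
  set s := M.mulVec p ⬝ᵥ M.mulVec p with hs
  have hs0 : 0 ≤ s := dp_self_nonneg _
  have h1 : (p ⬝ᵥ M.mulVec (M.mulVec p)) ^ 2 ≤
      (p ⬝ᵥ M.mulVec p) * (M.mulVec p ⬝ᵥ M.mulVec (M.mulVec p)) := cs hM hpsd _ _
  have h2 : p ⬝ᵥ M.mulVec (M.mulVec p) = s := by rw [dp_symm hM]
  have h3 : M.mulVec p ⬝ᵥ M.mulVec (M.mulVec p) ≤ Λ * s := hub _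
  have h4 : 0 ≤ p ⬝ᵥ M.mulVec p := hpsd p
  rw [h2] at h1
  rcases eq_or_lt_of_le hs0 with h | h
  · rw [← h]; positivity
  · nlinarith [h1, h3, h4, h]

lemma B_unit {B : Matrix (Fin d) (Fin d) ℝ} (hB : B.IsSymm)
    (hlb : ∀ ξ : Fin d → ℝ, ξ ⬝ᵥ ξ ≤ ξ ⬝ᵥ B.mulVec ξ) : IsUnit B.det := by
  have hpd : B.PosDef := by
    rw [posDef_iff_dotProduct_mulVec]
    constructor
    · rw [Matrix.IsHermitian, conjTranspose_eq_transpose_of_trivial]; exact hB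
    · intro x hx
      have h1 : 0 < x ⬝ᵥ x := by
        rcases (dp_self_nonneg x).lt_or_eq with h | h
        · exact h
        · exfalso; apply hx; ext i
          by_contra hi
          have h2 : 0 < x i * x i := mul_self_pos.2 hi
          have : 0 < x ⬝ᵥ x := Finset.sum_pos' (fun j _ => mul_self_nonneg _)
            ⟨i, Finset.mem_univ i, h2⟩
          linarith [h]
      have := hlb x
      simpa [star_trivial] using lt_of_lt_of_le h1 this
  exact hpd.det_pos.ne'.isUnit

lemma Binv_symm {B : Matrix (Fin d) (Fin d) ℝ} (hB : B.IsSymm) : B⁻¹.IsSymm := by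
  unfold Matrix.IsSymm
  rw [transpose_nonsing_inv, hB.eq]

lemma J_eq {A B : Matrix (Fin d) (Fin d) ℝ} (hB : B.IsSymm) (hu : IsUnit B.det)
    (p q : Fin d → ℝ) :
    Jmat A B p q = (1 / 2) * ((q - B.mulVec p) ⬝ᵥ B⁻¹.mulVec (q - B.mulVec p))
      + (1 / 2) * (p ⬝ᵥ A.mulVec p) - (1 / 2) * (p ⬝ᵥ B.mulVec p) := by
  have hinv : B⁻¹ * B = 1 := nonsing_inv_mul B hu
  have hBiBp : B⁻¹.mulVec (B.mulVec p) = p := by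
    rw [mulVec_mulVec, hinv, one_mulVec]
  have h1 : q ⬝ᵥ B⁻¹.mulVec (B.mulVec p) = q ⬝ᵥ p := by rw [hBiBp]
  have h2 : B.mulVec p ⬝ᵥ B⁻¹.mulVec q = p ⬝ᵥ q := by
    rw [dp_symm (Binv_symm hB), hBiBp]
  have h3 : B.mulVec p ⬝ᵥ B⁻¹.mulVec (B.mulVec p) = p ⬝ᵥ B.mulVec p := by
    rw [hBiBp, dotProduct_comm]
  have h4 : q ⬝ᵥ p = p ⬝ᵥ q := dotProduct_comm q p
  have h5 : B.mulVec p ⬝ᵥ p = p ⬝ᵥ B.mulVec p := dotProduct_comm _ _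
  simp only [Jmat, mulVec_sub, dotProduct_sub, sub_dotProduct, h1, h2, h3, h4, h5, hBiBp]
  ring

lemma dp_sub_le (u v : Fin d → ℝ) :
    (u - v) ⬝ᵥ (u - v) ≤ 2 * (u ⬝ᵥ u) + 2 * (v ⬝ᵥ v) := by
  have h := dp_self_nonneg (u + v)
  have hc : u ⬝ᵥ v = v ⬝ᵥ u := dotProduct_comm u v
  simp only [dotProduct_add, add_dotProduct, dotProduct_sub, sub_dotProduct] at h ⊢
  linarith

end Stmt10Aux

open Stmt10Aux

/-- The convex-duality defect controls the distance between the approximations of the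
diffusion matrix. -/
theorem stmt_10 (d : ℕ) (hd : 1 ≤ d) (Λ : ℝ) (hΛ : 1 ≤ Λ) :
    ∃ C : ℝ, 0 ≤ C ∧
      ∀ A B Atil : Matrix (Fin d) (Fin d) ℝ,
        A.IsSymm → B.IsSymm → Atil.IsSymm →
        (∀ ξ : Fin d → ℝ, ξ ⬝ᵥ ξ ≤ ξ ⬝ᵥ B.mulVec ξ) →
        (∀ ξ : Fin d → ℝ, ξ ⬝ᵥ B.mulVec ξ ≤ ξ ⬝ᵥ A.mulVec ξ) →
        (∀ ξ : Fin d → ℝ, ξ ⬝ᵥ A.mulVec ξ ≤ Λ * (ξ ⬝ᵥ ξ)) →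
        (∀ ξ : Fin d → ℝ, ξ ⬝ᵥ ξ ≤ ξ ⬝ᵥ Atil.mulVec ξ) →
        (∀ ξ : Fin d → ℝ, ξ ⬝ᵥ Atil.mulVec ξ ≤ Λ * (ξ ⬝ᵥ ξ)) →
        (∀ p : Fin d → ℝ, 0 ≤ Jmat A B p (Atil.mulVec p)) ∧
        matNorm (Atil - A) + matNorm (Atil - B) ≤
          C * ⨆ p : {p : Fin d → ℝ // p ⬝ᵥ p ≤ 1},
            Real.sqrt (Jmat A B p.1 (Atil.mulVec p.1)) := by
  have hΛ0 : (0 : ℝ) ≤ Λ := le_trans zero_le_one hΛ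
  refine ⟨3 * Real.sqrt (2 * Λ), by positivity, ?_⟩
  intro A B Atil hA hB hAt hIB hBA hAΛ hIAt hAtΛ
  set c1 : ℝ := Real.sqrt (2 * Λ) with hc1
  have hc10 : 0 ≤ c1 := Real.sqrt_nonneg _
  have hu : IsUnit B.det := B_unit hB hIB
  have hBpsd : ∀ x, 0 ≤ x ⬝ᵥ B.mulVec x := fun x => (dp_self_nonneg x).trans (hIB x)
  have hBub : ∀ x, x ⬝ᵥ B.mulVec x ≤ Λ * (x ⬝ᵥ x) := fun x => (hBA x).trans (hAΛ x)
  have hBinv : B * B⁻¹ = 1 := mul_nonsing_inv B hu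
  -- quadratic form of B⁻¹, expressed via `y = B⁻¹ x`
  have hBinv_eq : ∀ x : Fin d → ℝ,
      x ⬝ᵥ B⁻¹.mulVec x = (B⁻¹.mulVec x) ⬝ᵥ B.mulVec (B⁻¹.mulVec x) := by
    intro x
    have hxy : B.mulVec (B⁻¹.mulVec x) = x := by
      rw [mulVec_mulVec, hBinv, one_mulVec]
    conv_lhs => rw [← hxy]
    rw [dotProduct_comm, hxy]
  have hBinvlb : ∀ x : Fin d → ℝ, x ⬝ᵥ x ≤ Λ * (x ⬝ᵥ B⁻¹.mulVec x) := by
    intro x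
    have hxy : B.mulVec (B⁻¹.mulVec x) = x := by
      rw [mulVec_mulVec, hBinv, one_mulVec]
    have h1 := sq_bound hB hBpsd hΛ0 hBub (B⁻¹.mulVec x)
    rw [hxy] at h1
    rw [show x ⬝ᵥ B⁻¹.mulVec x = B⁻¹.mulVec x ⬝ᵥ x from dotProduct_comm _ _]
    exact h1
  have hBinvpsd : ∀ x : Fin d → ℝ, 0 ≤ x ⬝ᵥ B⁻¹.mulVec x := by
    intro x
    have h1 := hBinvlb x
    have h2 := dp_self_nonneg x
    nlinarith
  have hBinvub : ∀ x : Fin d → ℝ, x ⬝ᵥ B⁻¹.mulVec x ≤ x ⬝ᵥ x := by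
    intro x
    set y := B⁻¹.mulVec x with hy
    have hxy : B.mulVec y = x := by rw [hy, mulVec_mulVec, hBinv, one_mulVec]
    have e : x ⬝ᵥ B⁻¹.mulVec x = y ⬝ᵥ B.mulVec y := hBinv_eq x
    have hcs : (y ⬝ᵥ x) ^ 2 ≤ (y ⬝ᵥ y) * (x ⬝ᵥ x) := cs1 y x
    have hyx : y ⬝ᵥ x = y ⬝ᵥ B.mulVec y := by rw [← hxy]
    have hlow : y ⬝ᵥ y ≤ y ⬝ᵥ B.mulVec y := hIB y
    rw [hyx] at hcs
    rw [e]
    rcases eq_or_lt_of_le (hBpsd y) with h | h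
    · rw [← h]; exact dp_self_nonneg x
    · nlinarith [dp_self_nonneg x, mul_le_mul_of_nonneg_right hlow (dp_self_nonneg x)]
  -- decomposition of J
  have hsplit : ∀ p : Fin d → ℝ, Jmat A B p (Atil.mulVec p)
      = (1 / 2) * (((Atil - B).mulVec p) ⬝ᵥ B⁻¹.mulVec ((Atil - B).mulVec p))
        + (1 / 2) * (p ⬝ᵥ A.mulVec p) - (1 / 2) * (p ⬝ᵥ B.mulVec p) := by
    intro p
    rw [J_eq hB hu p (Atil.mulVec p), sub_mulVec]
  have hJnonneg : ∀ p : Fin d → ℝ, 0 ≤ Jmat A B p (Atil.mulVec p) := by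
    intro p
    rw [hsplit p]
    have h1 := hBinvpsd ((Atil - B).mulVec p)
    have h2 := hBA p
    linarith
  refine ⟨hJnonneg, ?_⟩
  -- pointwise bounds
  have hrB : ∀ p : Fin d → ℝ,
      ((Atil - B).mulVec p) ⬝ᵥ ((Atil - B).mulVec p) ≤ 2 * Λ * Jmat A B p (Atil.mulVec p) := by
    intro p
    have h1 := hBinvlb ((Atil - B).mulVec p)
    have h2 := hsplit p
    have h3 := hBA p
    nlinarith [h1, hBinvpsd ((Atil - B).mulVec p)]
  have hABsymm : (A - B).IsSymm := hA.sub hB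
  have hABpsd : ∀ x, 0 ≤ x ⬝ᵥ (A - B).mulVec x := by
    intro x
    simp only [sub_mulVec, dotProduct_sub]
    linarith [hBA x]
  have hABub : ∀ x, x ⬝ᵥ (A - B).mulVec x ≤ Λ * (x ⬝ᵥ x) := by
    intro x
    simp only [sub_mulVec, dotProduct_sub]
    have := hAΛ x
    have := hBpsd x
    linarith
  have hrA : ∀ p : Fin d → ℝ,
      ((A - B).mulVec p) ⬝ᵥ ((A - B).mulVec p) ≤ 2 * Λ * Jmat A B p (Atil.mulVec p) := by
    intro p
    have h1 := sq_bound hABsymm hABpsd hΛ0 hABub p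
    have h2 : p ⬝ᵥ (A - B).mulVec p = p ⬝ᵥ A.mulVec p - p ⬝ᵥ B.mulVec p := by
      simp [sub_mulVec, dotProduct_sub]
    have h3 := hsplit p
    have h4 := hBinvpsd ((Atil - B).mulVec p)
    nlinarith [hABpsd p]
  have hrAt : ∀ p : Fin d → ℝ,
      ((Atil - A).mulVec p) ⬝ᵥ ((Atil - A).mulVec p) ≤ 8 * Λ * Jmat A B p (Atil.mulVec p) := by
    intro p
    have hw : (Atil - A).mulVec p = (Atil - B).mulVec p - (A - B).mulVec p := by
      simp only [sub_mulVec]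
      abel
    rw [hw]
    have h := dp_sub_le ((Atil - B).mulVec p) ((A - B).mulVec p)
    have h1 := hrB p
    have h2 := hrA p
    linarith
  -- supremum machinery
  set S : ℝ := ⨆ p : {p : Fin d → ℝ // p ⬝ᵥ p ≤ 1},
      Real.sqrt (Jmat A B p.1 (Atil.mulVec p.1)) with hS
  have hJbound : ∀ p : {p : Fin d → ℝ // p ⬝ᵥ p ≤ 1},
      Jmat A B p.1 (Atil.mulVec p.1) ≤ Λ + Λ * Λ := by
    rintro ⟨p, hp⟩
    have h1 : p ⬝ᵥ A.mulVec p ≤ Λ := (hAΛ p).trans (by nlinarith)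
    have h2 : (Atil.mulVec p) ⬝ᵥ B⁻¹.mulVec (Atil.mulVec p) ≤ Λ * Λ := by
      have ha := hBinvub (Atil.mulVec p)
      have hb := sq_bound hAt (fun x => (dp_self_nonneg x).trans (hIAt x)) hΛ0 hAtΛ p
      have hc := hAtΛ p
      nlinarith [dp_self_nonneg p]
    have h3 : 0 ≤ p ⬝ᵥ Atil.mulVec p := (dp_self_nonneg p).trans (hIAt p)
    simp only [Jmat]
    nlinarith
  have hbdd : BddAbove (Set.range fun p : {p : Fin d → ℝ // p ⬝ᵥ p ≤ 1} =>
      Real.sqrt (Jmat A B p.1 (Atil.mulVec p.1))) := by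
    refine ⟨Real.sqrt (Λ + Λ * Λ), ?_⟩
    rintro _ ⟨p, rfl⟩
    exact Real.sqrt_le_sqrt (hJbound p)
  have hne : Nonempty {p : Fin d → ℝ // p ⬝ᵥ p ≤ 1} :=
    ⟨⟨0, by simp⟩⟩
  have hleS : ∀ p : {p : Fin d → ℝ // p ⬝ᵥ p ≤ 1},
      Real.sqrt (Jmat A B p.1 (Atil.mulVec p.1)) ≤ S := fun p => le_ciSup hbdd p
  -- the two operator-norm bounds
  have hnormB : matNorm (Atil - B) ≤ c1 * S := by
    refine ciSup_le fun p => ?_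
    have h1 : Real.sqrt (((Atil - B).mulVec p.1) ⬝ᵥ ((Atil - B).mulVec p.1)) ≤
        Real.sqrt (2 * Λ * Jmat A B p.1 (Atil.mulVec p.1)) := Real.sqrt_le_sqrt (hrB p.1)
    rw [Real.sqrt_mul (by positivity : (0:ℝ) ≤ 2 * Λ)] at h1
    exact h1.trans (mul_le_mul_of_nonneg_left (hleS p) hc10)
  have hnormA : matNorm (Atil - A) ≤ 2 * c1 * S := by
    refine ciSup_le fun p => ?_
    have h1 : Real.sqrt (((Atil - A).mulVec p.1) ⬝ᵥ ((Atil - A).mulVec p.1)) ≤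
        Real.sqrt (8 * Λ * Jmat A B p.1 (Atil.mulVec p.1)) := Real.sqrt_le_sqrt (hrAt p.1)
    have h2 : Real.sqrt (8 * Λ * Jmat A B p.1 (Atil.mulVec p.1))
        = 2 * c1 * Real.sqrt (Jmat A B p.1 (Atil.mulVec p.1)) := by
      have e1 : (8 : ℝ) * Λ = (2 * c1) ^ 2 := by
        have := Real.sq_sqrt (by positivity : (0:ℝ) ≤ 2 * Λ)
        rw [hc1]; nlinarith [this]
      rw [e1, Real.sqrt_mul (by positivity) _, Real.sqrt_sq (by positivity)]
    rw [h2] at h1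
    exact h1.trans (mul_le_mul_of_nonneg_left (hleS p) (by positivity))
  calc matNorm (Atil - A) + matNorm (Atil - B) ≤ 2 * c1 * S + c1 * S := by
        exact add_le_add hnormA hnormB
    _ = 3 * c1 * S := by ring
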